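/- Energy monotonicity along the semigroup: for every probability density π on ℝ^d and every t > 0, 𝓔(√(g_t ⋆ π)) ≤ 𝓔(√π). In particular, if f is even and g_{1/2} = f, so that the marginal M^π(x) = ∫_{ℝ^d} f(x−θ) π(θ) dθ equals (g_{1/2} ⋆ π)(x), then 𝓔(√(M^π)) ≤ 𝓔(√π). -/

import Mathlib

open MeasureTheory
open scoped ENNReal

noncomputable section

/-- Euclidean space ℝ^d. -/
abbrev Euc (d : ℕ) := EuclideanSpace ℝ (Fin d)

/-- The marginal density `M^π(x) = ∫ f(x−θ) π(θ) dθ`, as a value in `[0,∞]`. -/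
def margE (d : ℕ) (f prio : Euc d → ℝ) (x : Euc d) : ℝ≥0∞ :=
  ∫⁻ θ, ENNReal.ofReal (f (x - θ) * prio θ)

/-- The (real-valued) marginal density `M^π`. -/
def marg (d : ℕ) (f prio : Euc d → ℝ) (x : Euc d) : ℝ := (margE d f prio x).toReal

/-- Convolution `(g ⋆ u)(x) = ∫ g(x−z) u(z) dz`. -/
def convF (d : ℕ) (g u : Euc d → ℝ) (x : Euc d) : ℝ :=
  ∫ z, g (x - z) * u z

/-- The Dirichlet-form energy `𝓔(u) = sup_{t>0} (1/t) ∫ u (u − T_t u) ∈ [0,∞]`. -/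
def energy (d : ℕ) (g : ℝ → Euc d → ℝ) (u : Euc d → ℝ) : ℝ≥0∞ :=
  ⨆ (t : ℝ) (_ : 0 < t),
    ENNReal.ofReal ((1 / t) * ∫ x, u x * (u x - convF d (g t) u x))

namespace EnergyAux

variable {d : ℕ}

lemma rpow_two_eq (a : ℝ≥0∞) : a ^ (2:ℝ) = a * a := by
  rw [show (2:ℝ) = ((2:ℕ):ℝ) by norm_num, ENNReal.rpow_natCast]
  ring

lemma half_half (a : ℝ≥0∞) : (a ^ (1/2:ℝ)) ^ (2:ℝ) = a := by
  rw [← ENNReal.rpow_mul]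
  norm_num

lemma mul_self_half (a : ℝ≥0∞) : a ^ (1/2:ℝ) * a ^ (1/2:ℝ) = a := by
  rw [← rpow_two_eq, half_half]

lemma conj22 : Real.HolderConjugate 2 2 := ⟨by norm_num, by norm_num, by norm_num⟩

/-- From a real integral equal to 1 (for a nonneg measurable function), get a
lower Lebesgue integral equal to 1. -/
lemma lint_one {h : Euc d → ℝ} (h0 : ∀ x, 0 ≤ h x) (h1 : ∫ x, h x = 1) :
    ∫⁻ x, ENNReal.ofReal (h x) = 1 := by
  have hint : Integrable h (volume : Measure (Euc d)) := by
    by_contra hc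
    rw [integral_undef hc] at h1
    norm_num at h1
  rw [← ofReal_integral_eq_lintegral_ofReal hint (ae_of_all _ h0), h1, ENNReal.ofReal_one]

/-- The Bochner convolution of nonnegative measurable functions as the `toReal` of a
lower Lebesgue integral. -/
lemma convF_eq {gs u : Euc d → ℝ} (hg : Measurable gs) (hg0 : ∀ z, 0 ≤ gs z)
    (hu : Measurable u) (hu0 : ∀ x, 0 ≤ u x) (x : Euc d) :
    convF d gs u x
      = (∫⁻ z, ENNReal.ofReal (gs (x - z)) * ENNReal.ofReal (u z)).toReal := by
  have hm : Measurable fun z : Euc d => gs (x - z) * u z :=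
    (hg.comp (measurable_const.sub measurable_id)).mul hu
  rw [convF, integral_eq_lintegral_of_nonneg_ae
      (ae_of_all _ fun z => mul_nonneg (hg0 _) (hu0 _)) hm.aestronglyMeasurable]
  congr 1
  exact lintegral_congr fun z => ENNReal.ofReal_mul (hg0 _)

/-- The quadratic form `∫∫ G(x−y) V(x) V(y)`. -/
def LL (G V : Euc d → ℝ≥0∞) : ℝ≥0∞ := ∫⁻ x, ∫⁻ y, G (x - y) * (V x * V y)

lemma lintegral_kernel_left {G : Euc d → ℝ≥0∞} (hG : Measurable G)
    (hG1 : ∫⁻ z, G z = 1) (x : Euc d) : ∫⁻ y, G (x - y) = 1 := by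
  rw [(Measure.measurePreserving_sub_left (volume : Measure (Euc d)) x).lintegral_comp hG, hG1]

lemma lintegral_kernel_right {G : Euc d → ℝ≥0∞} (hG1 : ∫⁻ z, G z = 1) (y : Euc d) :
    ∫⁻ x, G (x - y) = 1 := by
  have h : ∫⁻ x, G (x + y - y) = ∫⁻ x, G (x - y) :=
    lintegral_add_right_eq_self (fun x => G (x - y)) y
  simp only [add_sub_cancel_right] at h
  rw [← h, hG1]

/-- Cauchy–Schwarz bound: the quadratic form of a probability kernel against a unit
`L²` function is at most 1. -/
lemma LL_le_one {G V : Euc d → ℝ≥0∞} (hG : Measurable G) (hV : Measurable V)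
    (hG1 : ∫⁻ z, G z = 1) (hV2 : ∫⁻ x, V x ^ (2:ℝ) = 1) : LL G V ≤ 1 := by
  have hker : Measurable fun p : Euc d × Euc d => G (p.1 - p.2) :=
    hG.comp (measurable_fst.sub measurable_snd)
  have hFm : Measurable fun p : Euc d × Euc d => G (p.1 - p.2) * (V p.1 * V p.2) :=
    hker.mul ((hV.comp measurable_fst).mul (hV.comp measurable_snd))
  have hfm : Measurable fun p : Euc d × Euc d => G (p.1 - p.2) ^ (1/2:ℝ) * V p.1 :=
    (hker.pow_const _).mul (hV.comp measurable_fst)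
  have hhm : Measurable fun p : Euc d × Euc d => G (p.1 - p.2) ^ (1/2:ℝ) * V p.2 :=
    (hker.pow_const _).mul (hV.comp measurable_snd)
  have key : LL G V = ∫⁻ p : Euc d × Euc d,
      ((fun p : Euc d × Euc d => G (p.1 - p.2) ^ (1/2:ℝ) * V p.1) *
       (fun p : Euc d × Euc d => G (p.1 - p.2) ^ (1/2:ℝ) * V p.2)) p
        ∂((volume : Measure (Euc d)).prod volume) := by
    rw [LL, ← lintegral_prod _ hFm.aemeasurable]
    refine lintegral_congr fun p => ?_
    simp only [Pi.mul_apply]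
    calc G (p.1 - p.2) * (V p.1 * V p.2)
        = (G (p.1 - p.2) ^ (1/2:ℝ) * G (p.1 - p.2) ^ (1/2:ℝ)) * (V p.1 * V p.2) := by
          rw [mul_self_half]
      _ = G (p.1 - p.2) ^ (1/2:ℝ) * V p.1 * (G (p.1 - p.2) ^ (1/2:ℝ) * V p.2) := by ring
  have hf2 : ∫⁻ p : Euc d × Euc d, (G (p.1 - p.2) ^ (1/2:ℝ) * V p.1) ^ (2:ℝ)
      ∂((volume : Measure (Euc d)).prod volume) = 1 := by
    have : ∀ p : Euc d × Euc d, (G (p.1 - p.2) ^ (1/2:ℝ) * V p.1) ^ (2:ℝ)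
        = G (p.1 - p.2) * V p.1 ^ (2:ℝ) := fun p => by
      rw [ENNReal.mul_rpow_of_nonneg _ _ (by norm_num : (0:ℝ) ≤ 2), half_half]
    simp only [this]
    have hm2 : Measurable fun p : Euc d × Euc d => G (p.1 - p.2) * V p.1 ^ (2:ℝ) :=
      hker.mul ((hV.comp measurable_fst).pow_const _)
    rw [lintegral_prod _ hm2.aemeasurable]
    have : ∀ x : Euc d, ∫⁻ y, G (x - y) * V x ^ (2:ℝ) = V x ^ (2:ℝ) := by
      intro x
      have hm4 : Measurable fun y : Euc d => G (x - y) :=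
        hG.comp (measurable_const.sub measurable_id)
      rw [lintegral_mul_const _ hm4, lintegral_kernel_left hG hG1, one_mul]
    simp only [this]
    exact hV2
  have hh2 : ∫⁻ p : Euc d × Euc d, (G (p.1 - p.2) ^ (1/2:ℝ) * V p.2) ^ (2:ℝ)
      ∂((volume : Measure (Euc d)).prod volume) = 1 := by
    have : ∀ p : Euc d × Euc d, (G (p.1 - p.2) ^ (1/2:ℝ) * V p.2) ^ (2:ℝ)
        = G (p.1 - p.2) * V p.2 ^ (2:ℝ) := fun p => by
      rw [ENNReal.mul_rpow_of_nonneg _ _ (by norm_num : (0:ℝ) ≤ 2), half_half]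
    simp only [this]
    have hm2 : Measurable fun p : Euc d × Euc d => G (p.1 - p.2) * V p.2 ^ (2:ℝ) :=
      hker.mul ((hV.comp measurable_snd).pow_const _)
    rw [lintegral_prod _ hm2.aemeasurable]
    have hswap : ∫⁻ x, ∫⁻ y, G (x - y) * V y ^ (2:ℝ)
        = ∫⁻ y, ∫⁻ x, G (x - y) * V y ^ (2:ℝ) := by
      have hm3 : Measurable fun p : Euc d × Euc d => G (p.1 - p.2) * V p.2 ^ (2:ℝ) :=
        hker.mul ((hV.comp measurable_snd).pow_const _)
      exact lintegral_lintegral_swap hm3.aemeasurable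
    rw [hswap]
    have : ∀ y : Euc d, ∫⁻ x, G (x - y) * V y ^ (2:ℝ) = V y ^ (2:ℝ) := by
      intro y
      have hm4 : Measurable fun x : Euc d => G (x - y) :=
        hG.comp (measurable_id.sub measurable_const)
      rw [lintegral_mul_const _ hm4, lintegral_kernel_right hG1, one_mul]
    simp only [this]
    exact hV2
  calc LL G V ≤ (∫⁻ p : Euc d × Euc d, (G (p.1 - p.2) ^ (1/2:ℝ) * V p.1) ^ (2:ℝ)
        ∂((volume : Measure (Euc d)).prod volume)) ^ (1/2:ℝ)
      * (∫⁻ p : Euc d × Euc d, (G (p.1 - p.2) ^ (1/2:ℝ) * V p.2) ^ (2:ℝ)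
        ∂((volume : Measure (Euc d)).prod volume)) ^ (1/2:ℝ) := by
        rw [key]
        exact ENNReal.lintegral_mul_le_Lp_mul_Lq _ conj22 hfm.aemeasurable hhm.aemeasurable
    _ = 1 := by rw [hf2, hh2, ENNReal.one_rpow, one_mul]

/-- Key comparison: the quadratic form of the square root of a smoothed density
dominates that of the original square root. -/
lemma LL_mono {Gs Gt P U : Euc d → ℝ≥0∞}
    (hGs : Measurable Gs) (hGt : Measurable Gt) (hP : Measurable P) (hU : Measurable U)
    (hGt1 : ∫⁻ z, Gt z = 1)
    (hU2 : ∀ᵐ x ∂(volume : Measure (Euc d)),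
      U x ^ (2:ℝ) = ∫⁻ z, Gt (x - z) * P z ^ (2:ℝ)) :
    LL Gs P ≤ LL Gs U := by
  -- change of variables in the smoothed square
  have hchg : ∀ x : Euc d, (∫⁻ z, Gt (x - z) * P z ^ (2:ℝ))
      = ∫⁻ θ, Gt θ * P (x - θ) ^ (2:ℝ) := by
    intro x
    have hm : Measurable fun z : Euc d => Gt (x - z) * P z ^ (2:ℝ) :=
      (hGt.comp (measurable_const.sub measurable_id)).mul (hP.pow_const _)
    have h := (Measure.measurePreserving_sub_left (volume : Measure (Euc d)) x).lintegral_comp hm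
    rw [← h]
    refine lintegral_congr fun θ => ?_
    rw [sub_sub_cancel]
  -- pointwise Hölder estimate
  have hold : ∀ x y : Euc d,
      (∫⁻ θ, Gt θ * (P (x - θ) * P (y - θ)))
        ≤ (∫⁻ z, Gt (x - z) * P z ^ (2:ℝ)) ^ (1/2:ℝ)
          * (∫⁻ z, Gt (y - z) * P z ^ (2:ℝ)) ^ (1/2:ℝ) := by
    intro x y
    have hfm : Measurable fun θ : Euc d => Gt θ ^ (1/2:ℝ) * P (x - θ) :=
      (hGt.pow_const _).mul (hP.comp (measurable_const.sub measurable_id))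
    have hgm : Measurable fun θ : Euc d => Gt θ ^ (1/2:ℝ) * P (y - θ) :=
      (hGt.pow_const _).mul (hP.comp (measurable_const.sub measurable_id))
    have h1 : (∫⁻ θ, Gt θ * (P (x - θ) * P (y - θ)))
        = ∫⁻ θ, ((fun θ => Gt θ ^ (1/2:ℝ) * P (x - θ))
            * (fun θ => Gt θ ^ (1/2:ℝ) * P (y - θ))) θ := by
      refine lintegral_congr fun θ => ?_
      simp only [Pi.mul_apply]
      calc Gt θ * (P (x - θ) * P (y - θ))
          = (Gt θ ^ (1/2:ℝ) * Gt θ ^ (1/2:ℝ)) * (P (x - θ) * P (y - θ)) := by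
            rw [mul_self_half]
        _ = Gt θ ^ (1/2:ℝ) * P (x - θ) * (Gt θ ^ (1/2:ℝ) * P (y - θ)) := by ring
    have h2 : ∀ w : Euc d, (∫⁻ θ, (Gt θ ^ (1/2:ℝ) * P (w - θ)) ^ (2:ℝ))
        = ∫⁻ z, Gt (w - z) * P z ^ (2:ℝ) := by
      intro w
      rw [hchg w]
      refine lintegral_congr fun θ => ?_
      rw [ENNReal.mul_rpow_of_nonneg _ _ (by norm_num : (0:ℝ) ≤ 2), half_half]
    calc (∫⁻ θ, Gt θ * (P (x - θ) * P (y - θ)))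
        ≤ (∫⁻ θ, (Gt θ ^ (1/2:ℝ) * P (x - θ)) ^ (2:ℝ)) ^ (1/2:ℝ)
          * (∫⁻ θ, (Gt θ ^ (1/2:ℝ) * P (y - θ)) ^ (2:ℝ)) ^ (1/2:ℝ) := by
          rw [h1]
          exact ENNReal.lintegral_mul_le_Lp_mul_Lq _ conj22 hfm.aemeasurable hgm.aemeasurable
      _ = _ := by rw [h2 x, h2 y]
  -- the triple integral is dominated by `LL Gs U`
  have stepD : (∫⁻ x, ∫⁻ y, Gs (x - y) * ∫⁻ θ, Gt θ * (P (x - θ) * P (y - θ))) ≤ LL Gs U := by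
    rw [LL]
    refine lintegral_mono_ae ?_
    filter_upwards [hU2] with x hx
    refine lintegral_mono_ae ?_
    filter_upwards [hU2] with y hy
    refine mul_le_mul_right ?_ _
    have hUx : (∫⁻ z, Gt (x - z) * P z ^ (2:ℝ)) ^ (1/2:ℝ) = U x := by
      rw [← hx, ← ENNReal.rpow_mul]
      norm_num
    have hUy : (∫⁻ z, Gt (y - z) * P z ^ (2:ℝ)) ^ (1/2:ℝ) = U y := by
      rw [← hy, ← ENNReal.rpow_mul]
      norm_num
    calc (∫⁻ θ, Gt θ * (P (x - θ) * P (y - θ))) ≤ _ := hold x y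
      _ = U x * U y := by rw [hUx, hUy]
  -- step E: the triple integral equals `LL Gs P`
  have hswap1 : ∀ x : Euc d,
      (∫⁻ y, ∫⁻ θ, Gs (x - y) * (Gt θ * (P (x - θ) * P (y - θ))))
        = ∫⁻ θ, ∫⁻ y, Gs (x - y) * (Gt θ * (P (x - θ) * P (y - θ))) := by
    intro x
    have hm : Measurable fun p : Euc d × Euc d =>
        Gs (x - p.1) * (Gt p.2 * (P (x - p.2) * P (p.1 - p.2))) :=
      (hGs.comp (measurable_const.sub measurable_fst)).mul
        ((hGt.comp measurable_snd).mul
          ((hP.comp (measurable_const.sub measurable_snd)).mul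
            (hP.comp (measurable_fst.sub measurable_snd))))
    exact lintegral_lintegral_swap hm.aemeasurable
  have hswap2 :
      (∫⁻ x, ∫⁻ θ, ∫⁻ y, Gs (x - y) * (Gt θ * (P (x - θ) * P (y - θ))))
        = ∫⁻ θ, ∫⁻ x, ∫⁻ y, Gs (x - y) * (Gt θ * (P (x - θ) * P (y - θ))) := by
    have hm : Measurable fun q : (Euc d × Euc d) × Euc d =>
        Gs (q.1.1 - q.2) * (Gt q.1.2 * (P (q.1.1 - q.1.2) * P (q.2 - q.1.2))) :=
      (hGs.comp ((measurable_fst.comp measurable_fst).sub measurable_snd)).mul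
        ((hGt.comp (measurable_snd.comp measurable_fst)).mul
          ((hP.comp ((measurable_fst.comp measurable_fst).sub
              (measurable_snd.comp measurable_fst))).mul
            (hP.comp (measurable_snd.sub (measurable_snd.comp measurable_fst)))))
    have hmu : Measurable (Function.uncurry fun (p : Euc d × Euc d) (y : Euc d) =>
        Gs (p.1 - y) * (Gt p.2 * (P (p.1 - p.2) * P (y - p.2)))) := hm
    have hm2 : Measurable fun p : Euc d × Euc d =>
        ∫⁻ y, Gs (p.1 - y) * (Gt p.2 * (P (p.1 - p.2) * P (y - p.2))) :=
      hmu.lintegral_prod_right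
    exact lintegral_lintegral_swap hm2.aemeasurable
  have hpull : ∀ x y : Euc d, Gs (x - y) * (∫⁻ θ, Gt θ * (P (x - θ) * P (y - θ)))
      = ∫⁻ θ, Gs (x - y) * (Gt θ * (P (x - θ) * P (y - θ))) := by
    intro x y
    have hm : Measurable fun θ : Euc d => Gt θ * (P (x - θ) * P (y - θ)) :=
      hGt.mul ((hP.comp (measurable_const.sub measurable_id)).mul
        (hP.comp (measurable_const.sub measurable_id)))
    exact (lintegral_const_mul _ hm).symm
  have htheta : ∀ θ : Euc d,
      (∫⁻ x, ∫⁻ y, Gs (x - y) * (Gt θ * (P (x - θ) * P (y - θ))))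
        = Gt θ * LL Gs P := by
    intro θ
    have hystep : ∀ x : Euc d,
        (∫⁻ y, Gs (x - y) * (Gt θ * (P (x - θ) * P (y - θ))))
          = Gt θ * ∫⁻ y, Gs ((x - θ) - y) * (P (x - θ) * P y) := by
      intro x
      have hm : Measurable fun y : Euc d => Gs (x - y) * (P (x - θ) * P (y - θ)) :=
        (hGs.comp (measurable_const.sub measurable_id)).mul
          (measurable_const.mul (hP.comp (measurable_id.sub measurable_const)))
      calc (∫⁻ y, Gs (x - y) * (Gt θ * (P (x - θ) * P (y - θ))))
          = ∫⁻ y, Gt θ * (Gs (x - y) * (P (x - θ) * P (y - θ))) :=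
            lintegral_congr fun y => by ring
        _ = Gt θ * ∫⁻ y, Gs (x - y) * (P (x - θ) * P (y - θ)) := lintegral_const_mul _ hm
        _ = Gt θ * ∫⁻ y, Gs ((x - θ) - y) * (P (x - θ) * P y) := by
            congr 1
            have h := lintegral_add_right_eq_self
              (μ := (volume : Measure (Euc d)))
              (fun y => Gs (x - y) * (P (x - θ) * P (y - θ))) θ
            rw [← h]
            refine lintegral_congr fun y => ?_
            simp only [add_sub_cancel_right]
            congr 2
            abel
    have hxstep :
        (∫⁻ x, Gt θ * ∫⁻ y, Gs ((x - θ) - y) * (P (x - θ) * P y))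
          = Gt θ * LL Gs P := by
      have hmu : Measurable fun p : Euc d × Euc d => Gs (p.1 - p.2) * (P p.1 * P p.2) :=
        (hGs.comp (measurable_fst.sub measurable_snd)).mul
          ((hP.comp measurable_fst).mul (hP.comp measurable_snd))
      have hmu' : Measurable (Function.uncurry fun (x : Euc d) (y : Euc d) =>
          Gs (x - y) * (P x * P y)) := hmu
      have hm : Measurable fun x : Euc d => ∫⁻ y, Gs (x - y) * (P x * P y) :=
        hmu'.lintegral_prod_right
      have hmc : Measurable fun x : Euc d => ∫⁻ y, Gs ((x - θ) - y) * (P (x - θ) * P y) :=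
        hm.comp (measurable_id.sub measurable_const)
      rw [lintegral_const_mul _ hmc]
      congr 1
      have h := lintegral_add_right_eq_self
        (μ := (volume : Measure (Euc d)))
        (fun x => ∫⁻ y, Gs ((x - θ) - y) * (P (x - θ) * P y)) θ
      rw [← h, LL]
      refine lintegral_congr fun x => ?_
      simp only [add_sub_cancel_right]
    calc (∫⁻ x, ∫⁻ y, Gs (x - y) * (Gt θ * (P (x - θ) * P (y - θ))))
        = ∫⁻ x, Gt θ * ∫⁻ y, Gs ((x - θ) - y) * (P (x - θ) * P y) :=
          lintegral_congr fun x => hystep x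
      _ = Gt θ * LL Gs P := hxstep
  have hE : LL Gs P
      = ∫⁻ x, ∫⁻ y, Gs (x - y) * ∫⁻ θ, Gt θ * (P (x - θ) * P (y - θ)) := by
    calc LL Gs P = ∫⁻ θ, Gt θ * LL Gs P := by
          rw [lintegral_mul_const _ hGt, hGt1, one_mul]
      _ = ∫⁻ θ, ∫⁻ x, ∫⁻ y, Gs (x - y) * (Gt θ * (P (x - θ) * P (y - θ))) :=
          lintegral_congr fun θ => (htheta θ).symm
      _ = ∫⁻ x, ∫⁻ θ, ∫⁻ y, Gs (x - y) * (Gt θ * (P (x - θ) * P (y - θ))) := hswap2.symm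
      _ = ∫⁻ x, ∫⁻ y, ∫⁻ θ, Gs (x - y) * (Gt θ * (P (x - θ) * P (y - θ))) :=
          lintegral_congr fun x => (hswap1 x).symm
      _ = ∫⁻ x, ∫⁻ y, Gs (x - y) * ∫⁻ θ, Gt θ * (P (x - θ) * P (y - θ)) :=
          lintegral_congr fun x => lintegral_congr fun y => (hpull x y).symm
  exact le_trans (le_of_eq hE) stepD

/-- The energy term at scale `s` in terms of the quadratic form `LL`. -/
lemma term_eq {s : ℝ} (hs : 0 < s) {gs v : Euc d → ℝ}
    (hgs : Measurable gs) (hgs0 : ∀ z, 0 ≤ gs z) (hgs1 : ∫ z, gs z = 1)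
    (hv : Measurable v) (hv0 : ∀ x, 0 ≤ v x)
    (hv2 : ∫⁻ x, ENNReal.ofReal (v x) ^ (2:ℝ) = 1) :
    ENNReal.ofReal ((1 / s) * ∫ x, v x * (v x - convF d gs v x))
      = (ENNReal.ofReal s)⁻¹ *
        (1 - LL (fun z => ENNReal.ofReal (gs z)) (fun x => ENNReal.ofReal (v x))) := by
  set G : Euc d → ℝ≥0∞ := fun z => ENNReal.ofReal (gs z) with hGdef
  set V : Euc d → ℝ≥0∞ := fun x => ENNReal.ofReal (v x) with hVdef
  have hG : Measurable G := hgs.ennreal_ofReal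
  have hV : Measurable V := hv.ennreal_ofReal
  have hmu : Measurable (Function.uncurry fun (x : Euc d) (y : Euc d) => G (x - y) * V y) :=
    (hG.comp (measurable_fst.sub measurable_snd)).mul (hV.comp measurable_snd)
  have hC : Measurable fun x : Euc d => ∫⁻ y, G (x - y) * V y := hmu.lintegral_prod_right
  have hCconv : ∀ x, convF d gs v x = (∫⁻ y, G (x - y) * V y).toReal := fun x =>
    convF_eq hgs hgs0 hv hv0 x
  have hconv_meas : Measurable (convF d gs v) := by
    have : convF d gs v = fun x => (∫⁻ y, G (x - y) * V y).toReal := funext hCconv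
    rw [this]
    exact hC.ennreal_toReal
  have hLL : LL G V = ∫⁻ x, V x * ∫⁻ y, G (x - y) * V y := by
    rw [LL]
    refine lintegral_congr fun x => ?_
    have hm : Measurable fun y : Euc d => G (x - y) * V y :=
      (hG.comp (measurable_const.sub measurable_id)).mul hV
    rw [← lintegral_const_mul _ hm]
    exact lintegral_congr fun y => by ring
  have hLL1 : LL G V ≤ 1 := LL_le_one hG hV (lint_one hgs0 hgs1) hv2
  have hLLne : LL G V ≠ ∞ := (lt_of_le_of_lt hLL1 ENNReal.one_lt_top).ne
  have hae_fin : ∀ᵐ x ∂(volume : Measure (Euc d)), V x * (∫⁻ y, G (x - y) * V y) < ∞ := by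
    refine ae_lt_top (hV.mul hC) ?_
    rw [← hLL]
    exact hLLne
  have hae_of : ∀ᵐ x ∂(volume : Measure (Euc d)),
      ENNReal.ofReal (v x * convF d gs v x) = V x * ∫⁻ y, G (x - y) * V y := by
    filter_upwards [hae_fin] with x hx
    rw [hCconv]
    rcases eq_or_ne (V x) 0 with h0 | h0
    · have hvx : v x = 0 := le_antisymm (by
        have := ENNReal.ofReal_eq_zero.mp h0
        linarith) (hv0 x)
      simp [hvx, h0]
    · have hCx : (∫⁻ y, G (x - y) * V y) ≠ ∞ := by
        intro hC'
        rw [hC', ENNReal.mul_top h0] at hx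
        exact absurd hx (lt_irrefl _)
      rw [ENNReal.ofReal_mul (hv0 x), ENNReal.ofReal_toReal hCx]
  have hsq_of : ∀ x, ENNReal.ofReal (v x * v x) = V x ^ (2:ℝ) := fun x => by
    rw [ENNReal.ofReal_mul (hv0 x), rpow_two_eq]
  have int_sq : Integrable (fun x => v x * v x) (volume : Measure (Euc d)) := by
    refine ⟨(hv.mul hv).aestronglyMeasurable, ?_⟩
    rw [hasFiniteIntegral_iff_ofReal (ae_of_all _ fun x => mul_nonneg (hv0 x) (hv0 x))]
    have : (∫⁻ x, ENNReal.ofReal (v x * v x)) = 1 := by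
      rw [lintegral_congr hsq_of]
      exact hv2
    rw [this]
    exact ENNReal.one_lt_top
  have int_vc : Integrable (fun x => v x * convF d gs v x) (volume : Measure (Euc d)) := by
    refine ⟨(hv.mul hconv_meas).aestronglyMeasurable, ?_⟩
    rw [hasFiniteIntegral_iff_ofReal (ae_of_all _ fun x =>
      mul_nonneg (hv0 x) (by rw [hCconv]; exact ENNReal.toReal_nonneg))]
    have : (∫⁻ x, ENNReal.ofReal (v x * convF d gs v x)) = LL G V := by
      rw [lintegral_congr_ae hae_of]
      exact hLL.symm
    rw [this]
    exact lt_of_le_of_lt hLL1 ENNReal.one_lt_top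
  have I_eq : (∫ x, v x * (v x - convF d gs v x))
      = (∫ x, v x * v x) - ∫ x, v x * convF d gs v x := by
    simp_rw [mul_sub]
    exact integral_sub int_sq int_vc
  have I1 : (∫ x, v x * v x) = 1 := by
    rw [integral_eq_lintegral_of_nonneg_ae (ae_of_all _ fun x => mul_nonneg (hv0 x) (hv0 x))
      (hv.mul hv).aestronglyMeasurable]
    rw [lintegral_congr hsq_of, hv2]
    simp
  have I2 : (∫ x, v x * convF d gs v x) = (LL G V).toReal := by
    rw [integral_eq_lintegral_of_nonneg_ae (ae_of_all _ fun x =>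
        mul_nonneg (hv0 x) (by rw [hCconv]; exact ENNReal.toReal_nonneg))
      (hv.mul hconv_meas).aestronglyMeasurable]
    rw [lintegral_congr_ae hae_of, ← hLL]
  have hsub : (1:ℝ) - (LL G V).toReal = ((1:ℝ≥0∞) - LL G V).toReal := by
    rw [ENNReal.toReal_sub_of_le hLL1 ENNReal.one_ne_top, ENNReal.toReal_one]
  have hne : (1:ℝ≥0∞) - LL G V ≠ ∞ :=
    (lt_of_le_of_lt tsub_le_self ENNReal.one_lt_top).ne
  rw [I_eq, I1, I2, hsub, ENNReal.ofReal_mul (by positivity : (0:ℝ) ≤ 1 / s),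
    ENNReal.ofReal_toReal hne, one_div, ENNReal.ofReal_inv_of_pos hs]

end EnergyAux

open EnergyAux in
/-- energy monotonicity along the semigroup: for every probability
density `π` and every `t > 0`, `𝓔(√(g_t ⋆ π)) ≤ 𝓔(√π)`. In particular, if `f`
is even and `g_{1/2} = f`, then `𝓔(√(M^π)) ≤ 𝓔(√π)`. -/
theorem energy_monotone_along_semigroup
    (d : ℕ) (hd : 1 ≤ d) (f : Euc d → ℝ) (g : ℝ → Euc d → ℝ)
    (hf_meas : Measurable f) (hf_nonneg : ∀ x, 0 ≤ f x)
    (hf_int : ∫ x, f x = 1)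
    (hg_meas : ∀ t : ℝ, 0 < t → Measurable (g t))
    (hg_nonneg : ∀ t : ℝ, 0 < t → ∀ z, 0 ≤ g t z)
    (hg_prob : ∀ t : ℝ, 0 < t → ∫ z, g t z = 1)
    (hg_even : ∀ t : ℝ, 0 < t → ∀ z, g t (-z) = g t z)
    (hg_semigroup : ∀ s t : ℝ, 0 < s → 0 < t →
      ∀ᵐ z ∂(volume : Measure (Euc d)), convF d (g s) (g t) z = g (s + t) z)
    (hg_one : ∀ z, g 1 z = ∫ η, f η * f (η - z)) :
    (∀ prio : Euc d → ℝ, Measurable prio → (∀ θ, 0 ≤ prio θ) →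
      (∫ θ, prio θ) = 1 → ∀ t : ℝ, 0 < t →
      energy d g (fun x => Real.sqrt (convF d (g t) prio x)) ≤
        energy d g (fun x => Real.sqrt (prio x))) ∧
    ((∀ z, f (-z) = f z) → (∀ z, g (1 / 2) z = f z) →
      ∀ prio : Euc d → ℝ, Measurable prio → (∀ θ, 0 ≤ prio θ) →
      (∫ θ, prio θ) = 1 →
      energy d g (fun x => Real.sqrt (marg d f prio x)) ≤
        energy d g (fun x => Real.sqrt (prio x))) := by
  have key : ∀ prio : Euc d → ℝ, Measurable prio → (∀ θ, 0 ≤ prio θ) →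
      (∫ θ, prio θ) = 1 → ∀ t : ℝ, 0 < t →
      energy d g (fun x => Real.sqrt (convF d (g t) prio x)) ≤
        energy d g (fun x => Real.sqrt (prio x)) := by
    intro prio hπm hπ0 hπ1 t ht
    have hGt : Measurable fun z : Euc d => ENNReal.ofReal (g t z) :=
      (hg_meas t ht).ennreal_ofReal
    have hGt1 : ∫⁻ z, ENNReal.ofReal (g t z) = 1 :=
      lint_one (hg_nonneg t ht) (hg_prob t ht)
    have hP : Measurable fun z : Euc d => ENNReal.ofReal (prio z) := hπm.ennreal_ofReal
    have hPi : Measurable fun z : Euc d => ENNReal.ofReal (Real.sqrt (prio z)) :=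
      hπm.sqrt.ennreal_ofReal
    have hPi2 : ∀ z : Euc d, ENNReal.ofReal (Real.sqrt (prio z)) ^ (2:ℝ)
        = ENNReal.ofReal (prio z) := fun z => by
      rw [rpow_two_eq, ← ENNReal.ofReal_mul (Real.sqrt_nonneg _),
        Real.mul_self_sqrt (hπ0 z)]
    have hCtu : Measurable (Function.uncurry fun (x : Euc d) (z : Euc d) =>
        ENNReal.ofReal (g t (x - z)) * ENNReal.ofReal (prio z)) :=
      (hGt.comp (measurable_fst.sub measurable_snd)).mul (hP.comp measurable_snd)
    have hCt : Measurable fun x : Euc d =>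
        ∫⁻ z, ENNReal.ofReal (g t (x - z)) * ENNReal.ofReal (prio z) :=
      hCtu.lintegral_prod_right
    have hCt1 : (∫⁻ x, ∫⁻ z, ENNReal.ofReal (g t (x - z)) * ENNReal.ofReal (prio z)) = 1 := by
      rw [lintegral_lintegral_swap hCtu.aemeasurable]
      have : ∀ z : Euc d,
          (∫⁻ x, ENNReal.ofReal (g t (x - z)) * ENNReal.ofReal (prio z))
            = ENNReal.ofReal (prio z) := by
        intro z
        have hm : Measurable fun x : Euc d => ENNReal.ofReal (g t (x - z)) :=
          hGt.comp (measurable_id.sub measurable_const)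
        rw [lintegral_mul_const _ hm, lintegral_kernel_right hGt1, one_mul]
      simp only [this]
      exact lint_one hπ0 hπ1
    have hfin : ∀ᵐ x ∂(volume : Measure (Euc d)),
        (∫⁻ z, ENNReal.ofReal (g t (x - z)) * ENNReal.ofReal (prio z)) < ∞ :=
      ae_lt_top hCt (by rw [hCt1]; exact ENNReal.one_ne_top)
    have hconv_eq : ∀ x, convF d (g t) prio x
        = (∫⁻ z, ENNReal.ofReal (g t (x - z)) * ENNReal.ofReal (prio z)).toReal :=
      convF_eq (hg_meas t ht) (hg_nonneg t ht) hπm hπ0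
    have hconv_meas : Measurable (convF d (g t) prio) := by
      rw [show convF d (g t) prio = fun x =>
        (∫⁻ z, ENNReal.ofReal (g t (x - z)) * ENNReal.ofReal (prio z)).toReal
        from funext hconv_eq]
      exact hCt.ennreal_toReal
    have hu_meas : Measurable fun x => Real.sqrt (convF d (g t) prio x) := hconv_meas.sqrt
    have hu0 : ∀ x, 0 ≤ Real.sqrt (convF d (g t) prio x) := fun x => Real.sqrt_nonneg _
    have hUof : ∀ x, ENNReal.ofReal (Real.sqrt (convF d (g t) prio x)) ^ (2:ℝ)
        = ENNReal.ofReal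
            ((∫⁻ z, ENNReal.ofReal (g t (x - z)) * ENNReal.ofReal (prio z)).toReal) := by
      intro x
      rw [rpow_two_eq, ← ENNReal.ofReal_mul (Real.sqrt_nonneg _),
        Real.mul_self_sqrt (by rw [hconv_eq]; exact ENNReal.toReal_nonneg), hconv_eq]
    have hU2 : ∀ᵐ x ∂(volume : Measure (Euc d)),
        ENNReal.ofReal (Real.sqrt (convF d (g t) prio x)) ^ (2:ℝ)
          = ∫⁻ z, ENNReal.ofReal (g t (x - z))
              * ENNReal.ofReal (Real.sqrt (prio z)) ^ (2:ℝ) := by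
      filter_upwards [hfin] with x hx
      rw [hUof x, ENNReal.ofReal_toReal hx.ne]
      exact lintegral_congr fun z => by rw [hPi2]
    have hu2 : ∫⁻ x, ENNReal.ofReal (Real.sqrt (convF d (g t) prio x)) ^ (2:ℝ) = 1 := by
      rw [lintegral_congr_ae (by
        filter_upwards [hfin] with x hx
        rw [hUof x, ENNReal.ofReal_toReal hx.ne] :
        (fun x => ENNReal.ofReal (Real.sqrt (convF d (g t) prio x)) ^ (2:ℝ))
          =ᵐ[volume] fun x =>
            ∫⁻ z, ENNReal.ofReal (g t (x - z)) * ENNReal.ofReal (prio z))]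
      exact hCt1
    have hv2 : ∫⁻ x, ENNReal.ofReal (Real.sqrt (prio x)) ^ (2:ℝ) = 1 := by
      rw [lintegral_congr hPi2]
      exact lint_one hπ0 hπ1
    simp only [energy]
    refine iSup₂_le fun s hs => ?_
    refine le_trans (le_of_eq (term_eq hs (hg_meas s hs) (hg_nonneg s hs) (hg_prob s hs)
      hu_meas hu0 hu2)) ?_
    have hmono := LL_mono (Gs := fun z => ENNReal.ofReal (g s z))
      (Gt := fun z => ENNReal.ofReal (g t z))
      (P := fun z => ENNReal.ofReal (Real.sqrt (prio z)))
      (U := fun x => ENNReal.ofReal (Real.sqrt (convF d (g t) prio x)))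
      (hg_meas s hs).ennreal_ofReal hGt hPi (hu_meas.ennreal_ofReal) hGt1 hU2
    refine le_trans (mul_le_mul_right (tsub_le_tsub_left hmono 1) _) ?_
    refine le_trans (le_of_eq (term_eq hs (hg_meas s hs) (hg_nonneg s hs) (hg_prob s hs)
      hπm.sqrt (fun x => Real.sqrt_nonneg _) hv2).symm) ?_
    exact le_iSup₂ (f := fun (r : ℝ) (_ : 0 < r) => ENNReal.ofReal ((1 / r) *
      ∫ x, Real.sqrt (prio x) *
        (Real.sqrt (prio x) - convF d (g r) (fun y => Real.sqrt (prio y)) x))) s hs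
  refine ⟨key, ?_⟩
  intro hfeven hghalf prio hπm hπ0 hπ1
  have hhalf : (0:ℝ) < 1 / 2 := by norm_num
  have hmf : (fun x => Real.sqrt (marg d f prio x))
      = fun x => Real.sqrt (convF d (g (1 / 2)) prio x) := by
    funext x
    congr 1
    rw [marg, margE, convF_eq (hg_meas _ hhalf) (hg_nonneg _ hhalf) hπm hπ0]
    congr 1
    exact lintegral_congr fun θ => by
      rw [hghalf, ENNReal.ofReal_mul (hf_nonneg _)]
  rw [hmf]
  exact key prio hπm hπ0 hπ1 (1 / 2) hhalf
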